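/- Let V be a finite-dimensional vector space equipped with a nondegenerate symmetric bilinear form over an algebraically closed field of characteristic zero, let r < (dim V)/2, and let V' ⊆ V be a subspace of dimension d'. If every isotropic subspace of V of dimension r intersects V' nontrivially, then r + d' > dim V. -/

import Mathlib

open Module Polynomial

set_option linter.unusedSectionVars false
set_option maxHeartbeats 1600000

namespace IsoProofAux

variable {F : Type*} [Field F] [IsAlgClosed F] [CharZero F]

section
variable {V : Type*} [AddCommGroup V] [Module F V] [FiniteDimensional F V]



lemma exists_isotropic (B : LinearMap.BilinForm F V)
    (hsymm : ∀ v w : V, B v w = B w v) (h2 : 2 ≤ finrank F V) :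
    ∃ e : V, e ≠ 0 ∧ B e e = 0 := by
  have : Nontrivial V := Module.nontrivial_of_finrank_pos (R := F) (by omega)
  obtain ⟨v, hv⟩ := exists_ne (0 : V)
  by_cases hvv : B v v = 0
  · exact ⟨v, hv, hvv⟩
  · have hspan : Submodule.span F ({v} : Set V) ≠ ⊤ := by
      intro h
      have := finrank_span_singleton (K := F) hv
      rw [h, finrank_top] at this
      omega
    obtain ⟨u, hu⟩ : ∃ u, u ∉ Submodule.span F ({v} : Set V) := by
      by_contra hc
      push_neg at hc
      exact hspan (Submodule.eq_top_iff'.2 hc)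
    obtain ⟨t, ht⟩ := IsAlgClosed.exists_root
      (C (B v v) * X ^ 2 + C (2 * B u v) * X + C (B u u))
      (by rw [Polynomial.degree_quadratic hvv]; exact two_ne_zero)
    refine ⟨u + t • v, ?_, ?_⟩
    · intro h
      apply hu
      have : u = (-t) • v := by
        rw [neg_smul]
        linear_combination (norm := module) h
      rw [this]
      exact Submodule.smul_mem _ _ (Submodule.mem_span_singleton_self v)
    · have heval : B v v * t ^ 2 + 2 * B u v * t + B u u = 0 := by
        have := ht
        simp only [Polynomial.IsRoot, Polynomial.eval_add, Polynomial.eval_mul,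
          Polynomial.eval_pow, Polynomial.eval_C, Polynomial.eval_X] at this
        linear_combination this
      have : B (u + t • v) (u + t • v)
          = B u u + t * B u v + t * B v u + t * t * B v v := by
        simp [map_add, map_smul]
        ring
      rw [this, hsymm v u]
      linear_combination heval

lemma hyperbolic_extend (B : LinearMap.BilinForm F V) (hB : B.Nondegenerate)
    (hsymm : ∀ v w : V, B v w = B w v) {e : V} (hee : B e e = 0) (he0 : e ≠ 0) :
    ∃ f : V, B f f = 0 ∧ B e f = 1 := by
  obtain ⟨g, hg⟩ : ∃ g, B e g ≠ 0 := by
    by_contra hc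
    push_neg at hc
    exact he0 (hB.1 e hc)
  set c := B e g with hc'
  refine ⟨c⁻¹ • g + (-(B g g) / (2 * c ^ 2)) • e, ?_, ?_⟩
  · simp only [map_add, map_smul, LinearMap.add_apply, LinearMap.smul_apply, smul_eq_mul]
    rw [hee, hsymm g e, ← hc']
    field_simp
    ring_nf
  · simp only [map_add, map_smul, smul_eq_mul]
    rw [hee, ← hc']
    field_simp
    ring




lemma hyperbolic_setup (B : LinearMap.BilinForm F V) (hB : B.Nondegenerate)
    (hsymm : ∀ v w : V, B v w = B w v) {e f : V} (hee : B e e = 0) (hff : B f f = 0)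
    (hef : B e f = 1) :
    IsCompl (Submodule.span F ({e, f} : Set V)) (B.orthogonal (Submodule.span F ({e, f} : Set V)))
    ∧ (B.restrict (B.orthogonal (Submodule.span F ({e, f} : Set V)))).Nondegenerate
    ∧ finrank F (B.orthogonal (Submodule.span F ({e, f} : Set V))) = finrank F V - 2 := by
  have hrefl : B.IsRefl := fun x y h => by rw [hsymm]; exact h
  set H := Submodule.span F ({e, f} : Set V) with hH
  have heH : e ∈ H := Submodule.subset_span (by simp)
  have hfH : f ∈ H := Submodule.subset_span (by simp)
  have hfe : B f e = 1 := by rw [hsymm]; exact hef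
  have hHnd : (B.restrict H).Nondegenerate := by
    refine LinearMap.BilinForm.Nondegenerate.ofSeparatingLeft ?_
    rintro ⟨x, hx⟩ hx0
    obtain ⟨a, b, rfl⟩ := Submodule.mem_span_pair.1 hx
    have h1 := hx0 ⟨e, heH⟩
    have h2 := hx0 ⟨f, hfH⟩
    simp only [LinearMap.BilinForm.restrict_apply, LinearMap.domRestrict_apply,
      map_add, map_smul, LinearMap.add_apply, LinearMap.smul_apply, smul_eq_mul,
      hee, hff, hef, hfe] at h1 h2
    have hb : b = 0 := by simpa using h1
    have ha : a = 0 := by simpa using h2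
    rw [Submodule.mk_eq_zero]
    simp [ha, hb]
  have hcompl : IsCompl H (B.orthogonal H) :=
    B.isCompl_orthogonal_of_restrict_nondegenerate hrefl hHnd
  have hEnd : (B.restrict (B.orthogonal H)).Nondegenerate := by
    apply B.nondegenerate_restrict_of_disjoint_orthogonal hrefl
    rw [LinearMap.BilinForm.orthogonal_orthogonal hB hrefl]
    exact hcompl.disjoint.symm
  have hli : LinearIndependent F ![e, f] := by
    rw [LinearIndependent.pair_iff]
    intro s t hst
    have h1 : B (s • e + t • f) f = s := by
      simp [map_add, map_smul, hef, hff]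
    have h2 : B (s • e + t • f) e = t := by
      simp [map_add, map_smul, hee, hfe]
    rw [hst, map_zero] at h1 h2
    exact ⟨by simpa using h1.symm, by simpa using h2.symm⟩
  have hH2 : finrank F H = 2 := by
    have : H = Submodule.span F (Set.range ![e, f]) := by
      rw [hH]; congr 1; simp [Matrix.range_cons, Matrix.range_empty, Set.pair_comm]
    rw [this, finrank_span_eq_card hli]
    simp
  refine ⟨hcompl, hEnd, ?_⟩
  rw [LinearMap.BilinForm.finrank_orthogonal hB, hH2]




lemma exists_nonisotropic (B : LinearMap.BilinForm F V)
    (hsymm : ∀ v w : V, B v w = B w v) {E : Submodule F V}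
    (hEnd : (B.restrict E).Nondegenerate) (hEbot : E ≠ ⊥) :
    ∃ w ∈ E, B w w ≠ 0 := by
  by_contra hc
  push_neg at hc
  obtain ⟨x, hxE, hx0⟩ := Submodule.exists_mem_ne_zero_of_ne_bot hEbot
  apply hx0
  have := hEnd.1 ⟨x, hxE⟩ (fun y => ?_)
  · simpa [Submodule.mk_eq_zero] using this
  · have hxy : B (x + (y : V)) (x + (y : V)) = 0 := hc _ (E.add_mem hxE y.2)
    have hxx : B x x = 0 := hc x hxE
    have hyy : B (y : V) (y : V) = 0 := hc _ y.2
    simp only [map_add, LinearMap.add_apply] at hxy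
    rw [hxx, hyy, hsymm (y : V) x] at hxy
    have h2 : (2 : F) * B x (y : V) = 0 := by linear_combination hxy
    have := mul_eq_zero.1 h2
    simp only [LinearMap.BilinForm.restrict_apply, LinearMap.domRestrict_apply]
    rcases this with h | h
    · exact absurd h two_ne_zero
    · exact h

lemma functional_zero (B : LinearMap.BilinForm F V) {e f : V} {E : Submodule F V}
    (hsup : (Submodule.span F ({e, f} : Set V)) ⊔ E = ⊤)
    (hw0 : ∃ w ∈ E, B w w ≠ 0)
    (φ : V →ₗ[F] F)
    (hφ : ∀ w ∈ E, φ f + φ w - B w w / 2 * φ e = 0) : φ = 0 := by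
  have hf : φ f = 0 := by
    have := hφ 0 E.zero_mem
    simpa using this
  have he : φ e = 0 := by
    obtain ⟨w0, hw0E, hw0ne⟩ := hw0
    have h1 := hφ w0 hw0E
    have h2 := hφ (-w0) (E.neg_mem hw0E)
    simp only [map_neg, LinearMap.map_neg] at h2
    have hBneg : B (-w0) (-w0) = B w0 w0 := by simp
    rw [hf] at h1 h2
    have : B w0 w0 * φ e = 0 := by
      have h2' : -φ w0 - B w0 w0 / 2 * φ e = 0 := by
        rw [← hBneg]; simpa using h2
      linear_combination -h1 - h2'
    rcases mul_eq_zero.1 this with h | h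
    · exact absurd h hw0ne
    · exact h
  have hw : ∀ w ∈ E, φ w = 0 := by
    intro w hw
    have := hφ w hw
    rw [hf, he] at this
    simpa using this
  ext x
  have hx : x ∈ (Submodule.span F ({e, f} : Set V)) ⊔ E := by rw [hsup]; trivial
  obtain ⟨h, hh, w, hwE, rfl⟩ := Submodule.mem_sup.1 hx
  obtain ⟨a, b, rfl⟩ := Submodule.mem_span_pair.1 hh
  simp [he, hf, hw w hwE]




lemma exists_isotropic_notMem (B : LinearMap.BilinForm F V) (hB : B.Nondegenerate)
    (hsymm : ∀ v w : V, B v w = B w v) (h3 : 3 ≤ finrank F V)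
    (A A' : Submodule F V) (hA : A ≠ ⊤) (hA' : A' ≠ ⊤) :
    ∃ e : V, e ≠ 0 ∧ B e e = 0 ∧ e ∉ A ∧ e ∉ A' := by
  by_contra hcon
  push_neg at hcon
  have hmem : ∀ v : V, v ≠ 0 → B v v = 0 → v ∈ A ∨ v ∈ A' := by
    intro v h0 hv
    by_cases hA0 : v ∈ A
    · exact Or.inl hA0
    · exact Or.inr (hcon v h0 hv hA0)
  obtain ⟨e, he0, hee⟩ := exists_isotropic B hsymm (by omega)
  obtain ⟨f, hff, hef⟩ := hyperbolic_extend B hB hsymm hee he0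
  obtain ⟨hcompl, hEnd, hEdim⟩ := hyperbolic_setup B hB hsymm hee hff hef
  set H := Submodule.span F ({e, f} : Set V) with hH
  set E := B.orthogonal H with hE
  have heH : e ∈ H := Submodule.subset_span (by simp)
  have hfH : f ∈ H := Submodule.subset_span (by simp)
  have hEe : ∀ w ∈ E, B e w = 0 := fun w hw =>
    (LinearMap.BilinForm.mem_orthogonal_iff.1 hw) e heH
  have hEf : ∀ w ∈ E, B f w = 0 := fun w hw =>
    (LinearMap.BilinForm.mem_orthogonal_iff.1 hw) f hfH
  have hEbot : E ≠ ⊥ := by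
    intro hbot
    rw [hbot] at hEdim
    simp only [finrank_bot] at hEdim
    omega
  have hw0 := exists_nonisotropic B hsymm hEnd hEbot
  set q : V → F := fun w => B w w with hq
  have hψiso : ∀ w ∈ E, B (f + w - (q w / 2) • e) (f + w - (q w / 2) • e) = 0 := by
    intro w hw
    have h1 := hEe w hw
    have h2 := hEf w hw
    have h2' : B w f = 0 := by rw [hsymm]; exact h2
    have h1' : B w e = 0 := by rw [hsymm]; exact h1
    have hfe : B f e = 1 := by rw [hsymm]; exact hef
    simp only [map_add, map_sub, map_smul, LinearMap.add_apply, LinearMap.sub_apply,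
      LinearMap.smul_apply, smul_eq_mul, hee, hff, hef, hfe, h1, h2, h1', h2', hq]
    ring
  have hψne : ∀ w ∈ E, f + w - (q w / 2) • e ≠ 0 := by
    intro w hw h0
    have h1 : B e (f + w - (q w / 2) • e) = 1 := by
      simp [map_add, map_sub, map_smul, hee, hef, hEe w hw]
    rw [h0] at h1
    simp at h1
  obtain ⟨φ, hφ0, hφA⟩ :=
    Submodule.exists_dual_map_eq_bot_of_lt_top (lt_top_iff_ne_top.2 hA) inferInstance
  obtain ⟨φ', hφ'0, hφ'A⟩ :=
    Submodule.exists_dual_map_eq_bot_of_lt_top (lt_top_iff_ne_top.2 hA') inferInstance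
  have hφAz : ∀ a ∈ A, φ a = 0 := by
    intro a ha
    have : φ a ∈ A.map φ := Submodule.mem_map_of_mem ha
    rwa [hφA, Submodule.mem_bot] at this
  have hφ'Az : ∀ a ∈ A', φ' a = 0 := by
    intro a ha
    have : φ' a ∈ A'.map φ' := Submodule.mem_map_of_mem ha
    rwa [hφ'A, Submodule.mem_bot] at this
  have hprod : ∀ w ∈ E, φ (f + w - (q w / 2) • e) = 0 ∨ φ' (f + w - (q w / 2) • e) = 0 := by
    intro w hw
    rcases hmem _ (hψne w hw) (hψiso w hw) with h | h
    · exact Or.inl (hφAz _ h)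
    · exact Or.inr (hφ'Az _ h)
  have hdich : (∀ w ∈ E, φ (f + w - (q w / 2) • e) = 0) ∨
      (∀ w ∈ E, φ' (f + w - (q w / 2) • e) = 0) := by
    by_contra hc
    push_neg at hc
    obtain ⟨⟨w1, hw1E, hw1⟩, ⟨w2, hw2E, hw2⟩⟩ := hc
    set d := w2 - w1 with hd
    have hdE : d ∈ E := E.sub_mem hw2E hw1E
    set P : F[X] := C (φ f + φ w1 - q w1 / 2 * φ e) + C (φ d - B w1 d * φ e) * X
        + C (-(q d / 2) * φ e) * X ^ 2 with hP
    set Q : F[X] := C (φ' f + φ' w1 - q w1 / 2 * φ' e) + C (φ' d - B w1 d * φ' e) * X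
        + C (-(q d / 2) * φ' e) * X ^ 2 with hQ
    have hqe : ∀ t : F, q (w1 + t • d) = q w1 + 2 * t * B w1 d + t ^ 2 * q d := by
      intro t
      simp only [hq, map_add, map_smul, LinearMap.add_apply, LinearMap.smul_apply, smul_eq_mul]
      rw [hsymm d w1]
      ring
    have hPeval : ∀ t : F, P.eval t = φ (f + (w1 + t • d) - (q (w1 + t • d) / 2) • e) := by
      intro t
      simp only [hP, map_add, map_sub, map_smul, Polynomial.eval_add, Polynomial.eval_mul,
        Polynomial.eval_pow, Polynomial.eval_C, Polynomial.eval_X, Polynomial.eval_sub, Polynomial.eval_neg, smul_eq_mul, hqe t]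
      ring
    have hQeval : ∀ t : F, Q.eval t = φ' (f + (w1 + t • d) - (q (w1 + t • d) / 2) • e) := by
      intro t
      simp only [hQ, map_add, map_sub, map_smul, Polynomial.eval_add, Polynomial.eval_mul,
        Polynomial.eval_pow, Polynomial.eval_C, Polynomial.eval_X, Polynomial.eval_sub, Polynomial.eval_neg, smul_eq_mul, hqe t]
      ring
    have hPQ : P * Q = 0 := by
      apply Polynomial.zero_of_eval_zero
      intro t
      rw [Polynomial.eval_mul, hPeval t, hQeval t]
      rcases hprod (w1 + t • d) (E.add_mem hw1E (E.smul_mem t hdE)) with h | h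
      · rw [h, zero_mul]
      · rw [h, mul_zero]
    rcases mul_eq_zero.1 hPQ with h | h
    · apply hw1
      have h0 := hPeval 0
      rw [h] at h0
      simp only [Polynomial.eval_zero, zero_smul, add_zero] at h0
      exact h0.symm
    · apply hw2
      have h0 := hQeval 1
      rw [h] at h0
      simp only [Polynomial.eval_zero, one_smul] at h0
      have hww : w1 + d = w2 := by rw [hd]; abel
      rw [hww] at h0
      exact h0.symm
  rcases hdich with hzero | hzero
  · apply hφ0
    apply functional_zero B hcompl.sup_eq_top hw0 φ
    intro w hw
    have := hzero w hw
    simp only [map_add, map_sub, map_smul, smul_eq_mul, hq] at this ⊢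
    linear_combination this
  · apply hφ'0
    apply functional_zero B hcompl.sup_eq_top hw0 φ'
    intro w hw
    have := hzero w hw
    simp only [map_add, map_sub, map_smul, smul_eq_mul, hq] at this ⊢
    linear_combination this





end

universe u

lemma key (r : ℕ) : ∀ (V : Type u) [AddCommGroup V] [Module F V] [FiniteDimensional F V]
    (B : LinearMap.BilinForm F V), B.Nondegenerate → (∀ v w : V, B v w = B w v) →
    ∀ U : Submodule F V, 2 * r < finrank F V → finrank F U + r ≤ finrank F V →
    ∃ W : Submodule F V, finrank F W = r ∧ (∀ x ∈ W, ∀ y ∈ W, B x y = 0) ∧ W ⊓ U = ⊥ := by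
  induction r with
  | zero =>
    intro V _ _ _ B hB hsymm U h1 h2
    refine ⟨⊥, finrank_bot F V, ?_, bot_inf_eq U⟩
    intro x hx y hy
    rw [Submodule.mem_bot] at hx
    rw [hx]
    simp
  | succ r ih =>
    intro V _ _ _ B hB hsymm U h1 h2
    have hrefl : B.IsRefl := fun x y h => by rw [hsymm]; exact h
    have h3 : 3 ≤ finrank F V := by omega
    -- find a suitable isotropic vector e
    obtain ⟨e, he0, hee, heU, hUe⟩ :
        ∃ e : V, e ≠ 0 ∧ B e e = 0 ∧ e ∉ U ∧
          finrank F ↥(U ⊓ B.orthogonal (Submodule.span F ({e} : Set V))) + r + 2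
            ≤ finrank F V := by
      rcases eq_or_ne U ⊥ with hUbot | hUbot
      · have hbotne : (⊥ : Submodule F V) ≠ ⊤ := by
          intro hcon
          have : finrank F (⊥ : Submodule F V) = finrank F V := by rw [hcon, finrank_top]
          rw [finrank_bot] at this
          omega
        obtain ⟨e, he0, hee, heA, _⟩ := exists_isotropic_notMem B hB hsymm h3 ⊥ ⊥ hbotne hbotne
        refine ⟨e, he0, hee, by rw [hUbot]; exact heA, ?_⟩
        rw [hUbot, bot_inf_eq, finrank_bot]
        omega
      · have hUtop : U ≠ ⊤ := by
          intro hcon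
          rw [hcon, finrank_top] at h2
          omega
        have hUorth : B.orthogonal U ≠ ⊤ := by
          intro hcon
          apply hUbot
          rw [Submodule.eq_bot_iff]
          intro u hu
          apply hB.1
          intro n
          have hn : n ∈ B.orthogonal U := by rw [hcon]; trivial
          exact (LinearMap.BilinForm.mem_orthogonal_iff.1 hn) u hu
        obtain ⟨e, he0, hee, heU, heUo⟩ :=
          exists_isotropic_notMem B hB hsymm h3 U (B.orthogonal U) hUtop hUorth
        refine ⟨e, he0, hee, heU, ?_⟩
        obtain ⟨u, huU, hue⟩ : ∃ u ∈ U, B u e ≠ 0 := by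
          by_contra hcc
          push_neg at hcc
          exact heUo (fun n hn => hcc n hn)
        have hlt : U ⊓ B.orthogonal (Submodule.span F ({e} : Set V)) < U := by
          refine lt_of_le_of_ne inf_le_left ?_
          intro hcon
          have hu' : u ∈ U ⊓ B.orthogonal (Submodule.span F ({e} : Set V)) := by
            rw [hcon]; exact huU
          have := (LinearMap.BilinForm.mem_orthogonal_iff.1 hu'.2) e
            (Submodule.mem_span_singleton_self e)
          -- this : B e u = 0
          rw [hsymm] at hue
          exact hue this
        have := Submodule.finrank_lt_finrank_of_lt hlt
        omega
    set eperp := B.orthogonal (Submodule.span F ({e} : Set V)) with heperp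
    -- hyperbolic pair
    obtain ⟨f, hff, hef⟩ := hyperbolic_extend B hB hsymm hee he0
    obtain ⟨hcompl, hEnd, hEdim⟩ := hyperbolic_setup B hB hsymm hee hff hef
    set H := Submodule.span F ({e, f} : Set V) with hH
    set E := B.orthogonal H with hE
    have heH : e ∈ H := Submodule.subset_span (by simp)
    have hEe : ∀ w ∈ E, B e w = 0 := fun w hw =>
      (LinearMap.BilinForm.mem_orthogonal_iff.1 hw) e heH
    -- projection onto E along H
    set π := E.linearProjOfIsCompl H hcompl.symm with hπ
    set U1 : Submodule F ↥E := (U ⊓ eperp).map π with hU1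
    have hU1le : finrank F U1 ≤ finrank F ↥(U ⊓ eperp) := Submodule.finrank_map_le π _
    -- restricted form
    set B' := B.restrict E with hB'
    have hB'nd : B'.Nondegenerate := hEnd
    have hB'symm : ∀ v w : ↥E, B' v w = B' w v := by
      intro v w
      simp only [hB', LinearMap.BilinForm.restrict_apply, LinearMap.domRestrict_apply]
      exact hsymm v w
    obtain ⟨W1, hW1rank, hW1iso, hW1U1⟩ := ih ↥E B' hB'nd hB'symm U1 (by omega) (by omega)
    -- assemble W
    set X := W1.map E.subtype with hX
    have hXE : X ≤ E := Submodule.map_subtype_le E W1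
    have heX : e ∉ X := by
      intro hcon
      have heE : e ∈ E := hXE hcon
      have : e ∈ H ⊓ E := ⟨heH, heE⟩
      rw [hcompl.inf_eq_bot] at this
      exact he0 this
    refine ⟨X ⊔ Submodule.span F ({e} : Set V), ?_, ?_, ?_⟩
    · have hinf : X ⊓ Submodule.span F ({e} : Set V) = ⊥ := by
        rw [Submodule.eq_bot_iff]
        rintro x ⟨hxX, hxe⟩
        obtain ⟨c, rfl⟩ := Submodule.mem_span_singleton.1 hxe
        rcases eq_or_ne c 0 with rfl | hc
        · simp
        · exfalso
          apply heX
          have := X.smul_mem c⁻¹ hxX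
          rwa [inv_smul_smul₀ hc] at this
      have := Submodule.finrank_sup_add_finrank_inf_eq X (Submodule.span F ({e} : Set V))
      rw [hinf, finrank_bot, finrank_span_singleton he0,
        Submodule.finrank_map_subtype_eq, hW1rank] at this
      omega
    · intro x hx y hy
      obtain ⟨xw, hxw, xe, hxe, rfl⟩ := Submodule.mem_sup.1 hx
      obtain ⟨yw, hyw, ye, hye, rfl⟩ := Submodule.mem_sup.1 hy
      obtain ⟨c, rfl⟩ := Submodule.mem_span_singleton.1 hxe
      obtain ⟨c', rfl⟩ := Submodule.mem_span_singleton.1 hye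
      obtain ⟨w1, hw1, rfl⟩ := Submodule.mem_map.1 hxw
      obtain ⟨w1', hw1', rfl⟩ := Submodule.mem_map.1 hyw
      have h11 : B (E.subtype w1) (E.subtype w1') = 0 := hW1iso w1 hw1 w1' hw1'
      have hew' : B e (E.subtype w1') = 0 := hEe _ w1'.2
      have hwe : B (E.subtype w1) e = 0 := by rw [hsymm]; exact hEe _ w1.2
      simp only [map_add, map_smul, LinearMap.add_apply, LinearMap.smul_apply, smul_eq_mul,
        h11, hew', hwe, hee]
      ring
    · rw [Submodule.eq_bot_iff]
      rintro x ⟨hxW, hxU⟩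
      obtain ⟨xw, hxw, xe, hxe, rfl⟩ := Submodule.mem_sup.1 hxW
      obtain ⟨c, rfl⟩ := Submodule.mem_span_singleton.1 hxe
      obtain ⟨w1, hw1, rfl⟩ := Submodule.mem_map.1 hxw
      have hxeperp : (E.subtype w1 + c • e) ∈ eperp := by
        rw [heperp, LinearMap.BilinForm.mem_orthogonal_iff]
        intro n hn
        obtain ⟨a, rfl⟩ := Submodule.mem_span_singleton.1 hn
        have h1 : B e (E.subtype w1) = 0 := hEe _ w1.2
        simp only [LinearMap.BilinForm.isOrtho_def, map_add, map_smul, LinearMap.smul_apply,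
          LinearMap.add_apply, smul_eq_mul, h1, hee]
        ring
      have hπx : π (E.subtype w1 + c • e) = w1 := by
        have h1 : π (E.subtype w1) = w1 := Submodule.linearProjOfIsCompl_apply_left hcompl.symm w1
        have h2 : π e = 0 := Submodule.projectionOnto_apply_of_mem_right hcompl.symm heH
        rw [map_add, map_smul, h1, h2, smul_zero, add_zero]
      have hmem1 : w1 ∈ U1 := by
        rw [hU1, ← hπx]
        exact Submodule.mem_map_of_mem ⟨hxU, hxeperp⟩
      have : w1 ∈ W1 ⊓ U1 := ⟨hw1, hmem1⟩
      rw [hW1U1] at this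
      rw [Submodule.mem_bot] at this
      have hx0 : E.subtype w1 + c • e = c • e := by rw [this]; simp
      rw [hx0] at hxU ⊢
      rcases eq_or_ne c 0 with rfl | hc
      · simp
      · exfalso
        apply heU
        have := U.smul_mem c⁻¹ hxU
        rwa [inv_smul_smul₀ hc] at this



end IsoProofAux

open IsoProofAux in
/-- If `V` carries a nondegenerate symmetric bilinear form, `r < (dim V)/2`, and every
`r`-dimensional isotropic subspace of `V` intersects the subspace `V'` (of dimension `d'`)
nontrivially, then `r + d' > dim V`. -/
theorem stmt_1 (F V : Type*) [Field F] [IsAlgClosed F] [CharZero F]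
    [AddCommGroup V] [Module F V] [FiniteDimensional F V]
    (B : LinearMap.BilinForm F V) (hB : B.Nondegenerate)
    (hBsymm : ∀ v w : V, B v w = B w v)
    (V' : Submodule F V) (d' r : ℕ) (hd' : finrank F V' = d')
    (hr : 0 < r) (hrV : 2 * r < finrank F V)
    (h : ∀ W : Submodule F V, finrank F W = r →
      (∀ x ∈ W, ∀ y ∈ W, B x y = 0) → 1 ≤ finrank F ↥(W ⊓ V')) :
    finrank F V < r + d' := by
  by_contra hcon
  push_neg at hcon
  obtain ⟨W, hWrank, hWiso, hWV'⟩ := key r V B hB hBsymm V' hrV (by omega)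
  have h1 := h W hWrank hWiso
  rw [hWV'] at h1
  rw [finrank_bot] at h1
  omega
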